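/- arXiv:2605.12701 — 2 statements merged into one kernel-verified Lean document; each statement's English description precedes it below -/
import Mathlib

section
/- Let f : ℝ^d → ℝ be continuously differentiable, let b, x, x̃ ∈ ℝ^d, let k be a coordinate index, let c ∈ ℝ and ε ≥ 0. Suppose |(∂f/∂x_k)(b + α(x − b)) − c| ≤ ε and |(∂f/∂x_k)(b + α(x̃ − b)) − c| ≤ ε for all α ∈ [0,1]. Then |IG_k(x; b) − IG_k(x̃; b) − (x_k − x̃_k) · c| ≤ ε · (|x_k − b_k| + |x̃_k − b_k|). -/
/-- Integrated gradients attribution of coordinate `j` at input `x` with baseline `b`: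
`IG_j(x; b) = (x_j − b_j) · ∫₀¹ (∂f/∂x_j)(b + α(x − b)) dα`. -/
noncomputable def IG {d : ℕ} (f : EuclideanSpace ℝ (Fin d) → ℝ) (j : Fin d)
    (x b : EuclideanSpace ℝ (Fin d)) : ℝ :=
  (x j - b j) * ∫ α in (0:ℝ)..1, fderiv ℝ f (b + α • (x - b)) (EuclideanSpace.single j 1)

lemma integral_near_const {d : ℕ} (f : EuclideanSpace ℝ (Fin d) → ℝ)
    (hf : ContDiff ℝ 1 f) (b x : EuclideanSpace ℝ (Fin d)) (k : Fin d) (c ε : ℝ)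
    (h : ∀ α ∈ Set.Icc (0:ℝ) 1,
      |fderiv ℝ f (b + α • (x - b)) (EuclideanSpace.single k 1) - c| ≤ ε) :
    |(∫ α in (0:ℝ)..1, fderiv ℝ f (b + α • (x - b)) (EuclideanSpace.single k 1)) - c| ≤ ε := by
  have hcont : Continuous fun α : ℝ =>
      fderiv ℝ f (b + α • (x - b)) (EuclideanSpace.single k 1) := by
    exact ((hf.continuous_fderiv one_ne_zero).comp (by continuity)).clm_apply continuous_const
  have hint : IntervalIntegrable
      (fun α : ℝ => fderiv ℝ f (b + α • (x - b)) (EuclideanSpace.single k 1))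
      MeasureTheory.volume 0 1 := hcont.intervalIntegrable 0 1
  have hintc : IntervalIntegrable (fun _ : ℝ => c) MeasureTheory.volume 0 1 :=
    intervalIntegrable_const
  have heq : (∫ α in (0:ℝ)..1, fderiv ℝ f (b + α • (x - b)) (EuclideanSpace.single k 1)) - c
      = ∫ α in (0:ℝ)..1,
        (fderiv ℝ f (b + α • (x - b)) (EuclideanSpace.single k 1) - c) := by
    rw [intervalIntegral.integral_sub hint hintc, intervalIntegral.integral_const]
    simp
  rw [heq]
  have := intervalIntegral.norm_integral_le_of_norm_le_const (a := (0:ℝ)) (b := 1) (C := ε)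
    (f := fun α => fderiv ℝ f (b + α • (x - b)) (EuclideanSpace.single k 1) - c) ?_
  · simpa using this
  · intro t ht
    rw [Set.uIoc_of_le zero_le_one] at ht
    exact h t ⟨le_of_lt ht.1, ht.2⟩

theorem approx_constant_gradient_bound {d : ℕ} (f : EuclideanSpace ℝ (Fin d) → ℝ)
    (hf : ContDiff ℝ 1 f) (b x x' : EuclideanSpace ℝ (Fin d)) (k : Fin d) (c ε : ℝ)
    (hε : 0 ≤ ε)
    (h1 : ∀ α ∈ Set.Icc (0:ℝ) 1,
      |fderiv ℝ f (b + α • (x - b)) (EuclideanSpace.single k 1) - c| ≤ ε)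
    (h2 : ∀ α ∈ Set.Icc (0:ℝ) 1,
      |fderiv ℝ f (b + α • (x' - b)) (EuclideanSpace.single k 1) - c| ≤ ε) :
    |IG f k x b - IG f k x' b - (x k - x' k) * c| ≤ ε * (|x k - b k| + |x' k - b k|) := by
  set I₁ := ∫ α in (0:ℝ)..1, fderiv ℝ f (b + α • (x - b)) (EuclideanSpace.single k 1)
  set I₂ := ∫ α in (0:ℝ)..1, fderiv ℝ f (b + α • (x' - b)) (EuclideanSpace.single k 1)
  have hb1 : |I₁ - c| ≤ ε := integral_near_const f hf b x k c ε h1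
  have hb2 : |I₂ - c| ≤ ε := integral_near_const f hf b x' k c ε h2
  have hrw : IG f k x b - IG f k x' b - (x k - x' k) * c
      = (x k - b k) * (I₁ - c) - (x' k - b k) * (I₂ - c) := by
    simp only [IG, I₁, I₂]; ring
  rw [hrw]
  calc |(x k - b k) * (I₁ - c) - (x' k - b k) * (I₂ - c)|
      ≤ |(x k - b k) * (I₁ - c)| + |(x' k - b k) * (I₂ - c)| := abs_sub _ _
    _ = |x k - b k| * |I₁ - c| + |x' k - b k| * |I₂ - c| := by rw [abs_mul, abs_mul]
    _ ≤ |x k - b k| * ε + |x' k - b k| * ε := by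
        gcongr
    _ = ε * (|x k - b k| + |x' k - b k|) := by ring
end

section
/- Let f : ℝ^d → ℝ be continuously differentiable and x, b ∈ ℝ^d. If f(x) ≠ f(b), then there exists a coordinate j with IG_j(x; b) ≠ 0; that is, some feature receives a nonzero integrated gradients attribution. -/
lemma clm_sum {d : ℕ} (L : EuclideanSpace ℝ (Fin d) →L[ℝ] ℝ)
    (v : EuclideanSpace ℝ (Fin d)) :
    L v = ∑ j : Fin d, v j * L (EuclideanSpace.single j 1) := by
  have hv : v = ∑ j : Fin d, v j • EuclideanSpace.single j (1:ℝ) := by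
    ext i
    rw [show (∑ j : Fin d, v j • EuclideanSpace.single j (1:ℝ)) i
        = ∑ j : Fin d, (v j • EuclideanSpace.single j (1:ℝ)) i from by rw [WithLp.ofLp_sum, Finset.sum_apply]]
    simp [EuclideanSpace.single_apply]
  conv_lhs => rw [hv]
  simp [map_sum, smul_eq_mul]

theorem IG_sensitivity {d : ℕ} (f : EuclideanSpace ℝ (Fin d) → ℝ)
    (hf : ContDiff ℝ 1 f) (x b : EuclideanSpace ℝ (Fin d))
    (hne : f x ≠ f b) :
    ∃ j : Fin d, IG f j x b ≠ 0 := by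
  set γ : ℝ → EuclideanSpace ℝ (Fin d) := fun α => b + α • (x - b) with hγ
  have hγc : Continuous γ := by continuity
  have hderiv : ∀ α : ℝ, HasDerivAt (fun t => f (γ t))
      (fderiv ℝ f (γ α) (x - b)) α := by
    intro α
    have h1 : HasDerivAt γ (x - b) α := by
      have : HasDerivAt (fun t : ℝ => t • (x - b)) ((1:ℝ) • (x - b)) α :=
        (hasDerivAt_id α).smul_const (x - b)
      simpa [hγ, one_smul] using this.const_add b
    exact ((hf.differentiable one_ne_zero).differentiableAt.hasFDerivAt).comp_hasDerivAt α h1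
  have hcont : Continuous fun α => fderiv ℝ f (γ α) (x - b) := by
    have h1 : Continuous fun α => fderiv ℝ f (γ α) :=
      (hf.continuous_fderiv one_ne_zero).comp hγc
    exact (ContinuousLinearMap.apply ℝ ℝ (x - b)).continuous.comp h1
  have hint : f (γ 1) - f (γ 0) = ∫ α in (0:ℝ)..1, fderiv ℝ f (γ α) (x - b) :=
    (intervalIntegral.integral_eq_sub_of_hasDerivAt (fun t _ => hderiv t)
      (hcont.intervalIntegrable 0 1)).symm
  have hγ0 : γ 0 = b := by simp [hγ]
  have hγ1 : γ 1 = x := by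
    simp [hγ]
  rw [hγ0] at hint
  rw [hγ1] at hint
  have hsum : f x - f b = ∑ j : Fin d, IG f j x b := by
    rw [hint]
    have : ∀ α : ℝ, fderiv ℝ f (γ α) (x - b)
        = ∑ j : Fin d, (x j - b j) * fderiv ℝ f (γ α) (EuclideanSpace.single j 1) := by
      intro α
      rw [clm_sum (fderiv ℝ f (γ α)) (x - b)]
      simp [PiLp.sub_apply]
    simp_rw [this]
    rw [intervalIntegral.integral_finset_sum]
    · refine Finset.sum_congr rfl fun j _ => ?_
      rw [IG, intervalIntegral.integral_const_mul]
    · intro j _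
      have : Continuous fun α => (x j - b j) * fderiv ℝ f (γ α) (EuclideanSpace.single j 1) := by
        have h1 : Continuous fun α => fderiv ℝ f (γ α) :=
          (hf.continuous_fderiv one_ne_zero).comp hγc
        exact continuous_const.mul
          ((ContinuousLinearMap.apply ℝ ℝ (EuclideanSpace.single j 1)).continuous.comp h1)
      exact this.intervalIntegrable 0 1
  by_contra h
  push_neg at h
  have : f x - f b = 0 := by rw [hsum]; exact Finset.sum_eq_zero fun j _ => h j
  exact hne (sub_eq_zero.mp this)
end
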